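/- For every real number x with −2√2 ≤ x ≤ 2√2, one has x + 0.2456 (x² − 4) + 0.0887 (x³ − 6x) + 0.0295 (x⁴ − 8x² + 8) ≥ 1.1691 − 1.9169 · log(3 − x), and moreover the left-hand side exceeds the right-hand side by at least 0.0004. Here log denotes the natural logarithm. -/

import Mathlib

open Real

private lemma exp_le_helper {c b : ℝ} (hc : |c| ≤ 1)
    (h : (∑ m ∈ Finset.range 10, c ^ m / m.factorial) + |c| ^ 10 * (11 / 36288000) ≤ b) :
    Real.exp c ≤ b := by
  have hb := Real.exp_bound hc (n := 10) (by norm_num)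
  have h2 := (abs_sub_le_iff.mp hb).1
  have h3 : (((10:ℕ).succ : ℝ)) / (((10:ℕ).factorial : ℝ) * (10:ℕ)) = 11 / 36288000 := by
    norm_num [Nat.factorial]
  rw [h3] at h2
  linarith

private lemma log_chord {t1 t2 c1 c2 t : ℝ} (h1 : 0 < t1) (h12 : t1 < t2)
    (hc1 : c1 ≤ Real.log t1) (hc2 : c2 ≤ Real.log t2)
    (hta : t1 ≤ t) (htb : t ≤ t2) :
    c1 * (t2 - t) + c2 * (t - t1) ≤ (t2 - t1) * Real.log t := by
  have hd : (0:ℝ) < t2 - t1 := by linarith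
  have ha : 0 ≤ (t2 - t) / (t2 - t1) := div_nonneg (by linarith) hd.le
  have hb : 0 ≤ (t - t1) / (t2 - t1) := div_nonneg (by linarith) hd.le
  have hab : (t2 - t) / (t2 - t1) + (t - t1) / (t2 - t1) = 1 := by field_simp; ring
  have key := strictConcaveOn_log_Ioi.concaveOn.2 (Set.mem_Ioi.mpr h1)
    (Set.mem_Ioi.mpr (by linarith : (0:ℝ) < t2)) ha hb hab
  simp only [smul_eq_mul] at key
  have ht' : (t2 - t) / (t2 - t1) * t1 + (t - t1) / (t2 - t1) * t2 = t := by
    field_simp; try ring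
  rw [ht'] at key
  have key2 := mul_le_mul_of_nonneg_left key hd.le
  have e : (t2 - t1) * ((t2 - t) / (t2 - t1) * Real.log t1 + (t - t1) / (t2 - t1) * Real.log t2)
      = (t2 - t) * Real.log t1 + (t - t1) * Real.log t2 := by
    field_simp; try ring
  rw [e] at key2
  have m1 := mul_le_mul_of_nonneg_left hc1 (by linarith : (0:ℝ) ≤ t2 - t)
  have m2 := mul_le_mul_of_nonneg_left hc2 (by linarith : (0:ℝ) ≤ t - t1)
  nlinarith [m1, m2, key2]


private lemma logLB0 : (-1762769/1000000 : ℝ) ≤ Real.log (17157/100000 : ℝ) := by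
  rw [Real.le_log_iff_exp_le (by norm_num)]
  have hhalf : Real.exp (-1762769/2000000 : ℝ) ≤ (207104529/500000000 : ℝ) := by
    apply exp_le_helper (by rw [abs_le]; constructor <;> norm_num)
    rw [abs_of_nonpos (by norm_num : (-1762769/2000000 : ℝ) ≤ (0:ℝ))]
    norm_num [Finset.sum_range_succ, Nat.factorial]
  have hsplit : ((-1762769/1000000 : ℝ)) = (-1762769/2000000 : ℝ) + (-1762769/2000000 : ℝ) := by norm_num
  rw [hsplit, Real.exp_add]
  have hpos := (Real.exp_pos ((-1762769/2000000 : ℝ))).le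
  nlinarith [hhalf, hpos]


private lemma logLB1 : (-279687/500000 : ℝ) ≤ Real.log (57157/100000 : ℝ) := by
  rw [Real.le_log_iff_exp_le (by norm_num)]
  apply exp_le_helper (by rw [abs_le]; constructor <;> norm_num)
  rw [abs_of_nonpos (by norm_num : (-279687/500000 : ℝ) ≤ (0:ℝ))]
  norm_num [Finset.sum_range_succ, Nat.factorial]


private lemma logLB2 : (315951/1000000 : ℝ) ≤ Real.log (137157/100000 : ℝ) := by
  rw [Real.le_log_iff_exp_le (by norm_num)]
  apply exp_le_helper (by rw [abs_le]; constructor <;> norm_num)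
  rw [abs_of_nonneg (by norm_num : (0:ℝ) ≤ (315951/1000000 : ℝ))]
  norm_num [Finset.sum_range_succ, Nat.factorial]


private lemma logLB3 : (256879/500000 : ℝ) ≤ Real.log (167157/100000 : ℝ) := by
  rw [Real.le_log_iff_exp_le (by norm_num)]
  apply exp_le_helper (by rw [abs_le]; constructor <;> norm_num)
  rw [abs_of_nonneg (by norm_num : (0:ℝ) ≤ (256879/500000 : ℝ))]
  norm_num [Finset.sum_range_succ, Nat.factorial]


private lemma logLB4 : (583087/1000000 : ℝ) ≤ Real.log (179157/100000 : ℝ) := by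
  rw [Real.le_log_iff_exp_le (by norm_num)]
  apply exp_le_helper (by rw [abs_le]; constructor <;> norm_num)
  rw [abs_of_nonneg (by norm_num : (0:ℝ) ≤ (583087/1000000 : ℝ))]
  norm_num [Finset.sum_range_succ, Nat.factorial]


private lemma logLB5 : (154007/250000 : ℝ) ≤ Real.log (185157/100000 : ℝ) := by
  rw [Real.le_log_iff_exp_le (by norm_num)]
  apply exp_le_helper (by rw [abs_le]; constructor <;> norm_num)
  rw [abs_of_nonneg (by norm_num : (0:ℝ) ≤ (154007/250000 : ℝ))]
  norm_num [Finset.sum_range_succ, Nat.factorial]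


private lemma logLB6 : (346963/500000 : ℝ) ≤ Real.log (200157/100000 : ℝ) := by
  rw [Real.le_log_iff_exp_le (by norm_num)]
  apply exp_le_helper (by rw [abs_le]; constructor <;> norm_num)
  rw [abs_of_nonneg (by norm_num : (0:ℝ) ≤ (346963/500000 : ℝ))]
  norm_num [Finset.sum_range_succ, Nat.factorial]


private lemma logLB7 : (290909/250000 : ℝ) ≤ Real.log (320157/100000 : ℝ) := by
  rw [Real.le_log_iff_exp_le (by norm_num)]
  have hhalf : Real.exp (290909/500000 : ℝ) ≤ (357857681/200000000 : ℝ) := by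
    apply exp_le_helper (by rw [abs_le]; constructor <;> norm_num)
    rw [abs_of_nonneg (by norm_num : (0:ℝ) ≤ (290909/500000 : ℝ))]
    norm_num [Finset.sum_range_succ, Nat.factorial]
  have hsplit : ((290909/250000 : ℝ)) = (290909/500000 : ℝ) + (290909/500000 : ℝ) := by norm_num
  rw [hsplit, Real.exp_add]
  have hpos := (Real.exp_pos ((290909/500000 : ℝ))).le
  nlinarith [hhalf, hpos]


private lemma logLB8 : (329791/200000 : ℝ) ≤ Real.log (520157/100000 : ℝ) := by
  rw [Real.le_log_iff_exp_le (by norm_num)]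
  have hhalf : Real.exp (329791/400000 : ℝ) ≤ (2280688797/1000000000 : ℝ) := by
    apply exp_le_helper (by rw [abs_le]; constructor <;> norm_num)
    rw [abs_of_nonneg (by norm_num : (0:ℝ) ≤ (329791/400000 : ℝ))]
    norm_num [Finset.sum_range_succ, Nat.factorial]
  have hsplit : ((329791/200000 : ℝ)) = (329791/400000 : ℝ) + (329791/400000 : ℝ) := by norm_num
  rw [hsplit, Real.exp_add]
  have hpos := (Real.exp_pos ((329791/400000 : ℝ))).le
  nlinarith [hhalf, hpos]


private lemma logLB9 : (426257/250000 : ℝ) ≤ Real.log (550157/100000 : ℝ) := by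
  rw [Real.le_log_iff_exp_le (by norm_num)]
  have hhalf : Real.exp (426257/500000 : ℝ) ≤ (2345536127/1000000000 : ℝ) := by
    apply exp_le_helper (by rw [abs_le]; constructor <;> norm_num)
    rw [abs_of_nonneg (by norm_num : (0:ℝ) ≤ (426257/500000 : ℝ))]
    norm_num [Finset.sum_range_succ, Nat.factorial]
  have hsplit : ((426257/250000 : ℝ)) = (426257/500000 : ℝ) + (426257/500000 : ℝ) := by norm_num
  rw [hsplit, Real.exp_add]
  have hpos := (Real.exp_pos ((426257/500000 : ℝ))).le
  nlinarith [hhalf, hpos]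


private lemma logLB10 : (440753/250000 : ℝ) ≤ Real.log (583/100 : ℝ) := by
  rw [Real.le_log_iff_exp_le (by norm_num)]
  have hhalf : Real.exp (440753/500000 : ℝ) ≤ (120726663/50000000 : ℝ) := by
    apply exp_le_helper (by rw [abs_le]; constructor <;> norm_num)
    rw [abs_of_nonneg (by norm_num : (0:ℝ) ≤ (440753/500000 : ℝ))]
    norm_num [Finset.sum_range_succ, Nat.factorial]
  have hsplit : ((440753/250000 : ℝ)) = (440753/500000 : ℝ) + (440753/500000 : ℝ) := by norm_num
  rw [hsplit, Real.exp_add]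
  have hpos := (Real.exp_pos ((440753/500000 : ℝ))).le
  nlinarith [hhalf, hpos]


set_option maxHeartbeats 1000000 in
theorem stmt_1 (x : ℝ) (h1 : -(2 * Real.sqrt 2) ≤ x) (h2 : x ≤ 2 * Real.sqrt 2) :
    x + 0.2456 * (x ^ 2 - 4) + 0.0887 * (x ^ 3 - 6 * x) + 0.0295 * (x ^ 4 - 8 * x ^ 2 + 8)
      ≥ 1.1691 - 1.9169 * Real.log (3 - x) ∧
    x + 0.2456 * (x ^ 2 - 4) + 0.0887 * (x ^ 3 - 6 * x) + 0.0295 * (x ^ 4 - 8 * x ^ 2 + 8)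
      - (1.1691 - 1.9169 * Real.log (3 - x)) ≥ 0.0004 := by
  have hs2 : Real.sqrt 2 ^ 2 = 2 := Real.sq_sqrt (by norm_num)
  have hs0 : (0:ℝ) ≤ Real.sqrt 2 := Real.sqrt_nonneg 2
  have hsu : Real.sqrt 2 < 1.4142136 := by nlinarith
  have hx1 : (-2.8284272 : ℝ) ≤ x := by nlinarith
  have hx2 : x ≤ (2.8284272 : ℝ) := by nlinarith
  have main : x + 0.2456 * (x ^ 2 - 4) + 0.0887 * (x ^ 3 - 6 * x) + 0.0295 * (x ^ 4 - 8 * x ^ 2 + 8)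
      - (1.1691 - 1.9169 * Real.log (3 - x)) ≥ 0.0004 := by
    rcases le_total x (3 - (185157/100000 : ℝ)) with hc4 | hc4
    · -- t ≥ pts[mid+1]
      rcases le_total x (3 - (520157/100000 : ℝ)) with hc7 | hc7
      · -- t ≥ pts[mid+1]
        rcases le_total x (3 - (550157/100000 : ℝ)) with hc8 | hc8
        · -- t ≥ pts[mid+1]
          have hlog := log_chord (by norm_num : (0:ℝ) < (550157/100000 : ℝ)) (by norm_num : (550157/100000 : ℝ) < (583/100 : ℝ)) logLB9 logLB10 (t := 3 - x) (by linarith) (by linarith)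
          nlinarith [hlog, sq_nonneg (x - (-2.5016:ℝ)), mul_nonneg (by linarith : (0:ℝ) ≤ x - (-2.8284272:ℝ)) (by linarith : (0:ℝ) ≤ (-2.5015700:ℝ) - x), mul_nonneg (mul_nonneg (by linarith : (0:ℝ) ≤ x - (-2.8284272:ℝ)) (by linarith : (0:ℝ) ≤ (-2.5015700:ℝ) - x)) (sq_nonneg (x - (-2.5016:ℝ)))]
        · 
          have hlog := log_chord (by norm_num : (0:ℝ) < (520157/100000 : ℝ)) (by norm_num : (520157/100000 : ℝ) < (550157/100000 : ℝ)) logLB8 logLB9 (t := 3 - x) (by linarith) (by linarith)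
          nlinarith [hlog, sq_nonneg (x - (-2.3535:ℝ)), mul_nonneg (by linarith : (0:ℝ) ≤ x - (-2.5015700:ℝ)) (by linarith : (0:ℝ) ≤ (-2.2015700:ℝ) - x), mul_nonneg (mul_nonneg (by linarith : (0:ℝ) ≤ x - (-2.5015700:ℝ)) (by linarith : (0:ℝ) ≤ (-2.2015700:ℝ) - x)) (sq_nonneg (x - (-2.3535:ℝ)))]
      · 
        rcases le_total x (3 - (320157/100000 : ℝ)) with hc6 | hc6
        · -- t ≥ pts[mid+1]
          have hlog := log_chord (by norm_num : (0:ℝ) < (320157/100000 : ℝ)) (by norm_num : (320157/100000 : ℝ) < (520157/100000 : ℝ)) logLB7 logLB8 (t := 3 - x) (by linarith) (by linarith)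
          nlinarith [hlog, sq_nonneg (x - (-2.1856:ℝ)), mul_nonneg (by linarith : (0:ℝ) ≤ x - (-2.2015700:ℝ)) (by linarith : (0:ℝ) ≤ (-0.2015700:ℝ) - x), mul_nonneg (mul_nonneg (by linarith : (0:ℝ) ≤ x - (-2.2015700:ℝ)) (by linarith : (0:ℝ) ≤ (-0.2015700:ℝ) - x)) (sq_nonneg (x - (-2.1856:ℝ)))]
        · 
          rcases le_total x (3 - (200157/100000 : ℝ)) with hc5 | hc5
          · -- t ≥ pts[mid+1]
            have hlog := log_chord (by norm_num : (0:ℝ) < (200157/100000 : ℝ)) (by norm_num : (200157/100000 : ℝ) < (320157/100000 : ℝ)) logLB6 logLB7 (t := 3 - x) (by linarith) (by linarith)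
            nlinarith [hlog, sq_nonneg (x - (0.8520:ℝ)), mul_nonneg (by linarith : (0:ℝ) ≤ x - (-0.2015700:ℝ)) (by linarith : (0:ℝ) ≤ (0.9984300:ℝ) - x), mul_nonneg (mul_nonneg (by linarith : (0:ℝ) ≤ x - (-0.2015700:ℝ)) (by linarith : (0:ℝ) ≤ (0.9984300:ℝ) - x)) (sq_nonneg (x - (0.8520:ℝ)))]
          · 
            have hlog := log_chord (by norm_num : (0:ℝ) < (185157/100000 : ℝ)) (by norm_num : (185157/100000 : ℝ) < (200157/100000 : ℝ)) logLB5 logLB6 (t := 3 - x) (by linarith) (by linarith)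
            nlinarith [hlog, sq_nonneg (x - (1.1262:ℝ)), mul_nonneg (by linarith : (0:ℝ) ≤ x - (0.9984300:ℝ)) (by linarith : (0:ℝ) ≤ (1.1484300:ℝ) - x), mul_nonneg (mul_nonneg (by linarith : (0:ℝ) ≤ x - (0.9984300:ℝ)) (by linarith : (0:ℝ) ≤ (1.1484300:ℝ) - x)) (sq_nonneg (x - (1.1262:ℝ)))]
    · 
      rcases le_total x (3 - (167157/100000 : ℝ)) with hc2 | hc2
      · -- t ≥ pts[mid+1]
        rcases le_total x (3 - (179157/100000 : ℝ)) with hc3 | hc3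
        · -- t ≥ pts[mid+1]
          have hlog := log_chord (by norm_num : (0:ℝ) < (179157/100000 : ℝ)) (by norm_num : (179157/100000 : ℝ) < (185157/100000 : ℝ)) logLB4 logLB5 (t := 3 - x) (by linarith) (by linarith)
          nlinarith [hlog, sq_nonneg (x - (1.1779:ℝ)), mul_nonneg (by linarith : (0:ℝ) ≤ x - (1.1484300:ℝ)) (by linarith : (0:ℝ) ≤ (1.2084300:ℝ) - x), mul_nonneg (mul_nonneg (by linarith : (0:ℝ) ≤ x - (1.1484300:ℝ)) (by linarith : (0:ℝ) ≤ (1.2084300:ℝ) - x)) (sq_nonneg (x - (1.1779:ℝ)))]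
        · 
          have hlog := log_chord (by norm_num : (0:ℝ) < (167157/100000 : ℝ)) (by norm_num : (167157/100000 : ℝ) < (179157/100000 : ℝ)) logLB3 logLB4 (t := 3 - x) (by linarith) (by linarith)
          nlinarith [hlog, sq_nonneg (x - (1.2249:ℝ)), mul_nonneg (by linarith : (0:ℝ) ≤ x - (1.2084300:ℝ)) (by linarith : (0:ℝ) ≤ (1.3284300:ℝ) - x), mul_nonneg (mul_nonneg (by linarith : (0:ℝ) ≤ x - (1.2084300:ℝ)) (by linarith : (0:ℝ) ≤ (1.3284300:ℝ) - x)) (sq_nonneg (x - (1.2249:ℝ)))]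
      · 
        rcases le_total x (3 - (137157/100000 : ℝ)) with hc1 | hc1
        · -- t ≥ pts[mid+1]
          have hlog := log_chord (by norm_num : (0:ℝ) < (137157/100000 : ℝ)) (by norm_num : (137157/100000 : ℝ) < (167157/100000 : ℝ)) logLB2 logLB3 (t := 3 - x) (by linarith) (by linarith)
          nlinarith [hlog, sq_nonneg (x - (1.3463:ℝ)), mul_nonneg (by linarith : (0:ℝ) ≤ x - (1.3284300:ℝ)) (by linarith : (0:ℝ) ≤ (1.6284300:ℝ) - x), mul_nonneg (mul_nonneg (by linarith : (0:ℝ) ≤ x - (1.3284300:ℝ)) (by linarith : (0:ℝ) ≤ (1.6284300:ℝ) - x)) (sq_nonneg (x - (1.3463:ℝ)))]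
        · 
          rcases le_total x (3 - (57157/100000 : ℝ)) with hc0 | hc0
          · -- t ≥ pts[mid+1]
            have hlog := log_chord (by norm_num : (0:ℝ) < (57157/100000 : ℝ)) (by norm_num : (57157/100000 : ℝ) < (137157/100000 : ℝ)) logLB1 logLB2 (t := 3 - x) (by linarith) (by linarith)
            nlinarith [hlog, sq_nonneg (x - (1.8208:ℝ)), mul_nonneg (by linarith : (0:ℝ) ≤ x - (1.6284300:ℝ)) (by linarith : (0:ℝ) ≤ (2.4284300:ℝ) - x), mul_nonneg (mul_nonneg (by linarith : (0:ℝ) ≤ x - (1.6284300:ℝ)) (by linarith : (0:ℝ) ≤ (2.4284300:ℝ) - x)) (sq_nonneg (x - (1.8208:ℝ)))]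
          · 
            have hlog := log_chord (by norm_num : (0:ℝ) < (17157/100000 : ℝ)) (by norm_num : (17157/100000 : ℝ) < (57157/100000 : ℝ)) logLB0 logLB1 (t := 3 - x) (by linarith) (by linarith)
            nlinarith [hlog, sq_nonneg (x - (2.8284:ℝ)), mul_nonneg (by linarith : (0:ℝ) ≤ x - (2.4284300:ℝ)) (by linarith : (0:ℝ) ≤ (2.8284272:ℝ) - x), mul_nonneg (mul_nonneg (by linarith : (0:ℝ) ≤ x - (2.4284300:ℝ)) (by linarith : (0:ℝ) ≤ (2.8284272:ℝ) - x)) (sq_nonneg (x - (2.8284:ℝ)))]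
  exact ⟨by linarith, main⟩
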